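/- Let K be a field, let E be a purely inseparable field extension of K, and let K' be a separable algebraic field extension of K. Then the tensor product E ⊗_K K' is a field. -/

import Mathlib

open scoped TensorProduct

theorem aux_isField (K E L : Type*) [Field K] [Field E] [Field L]
    [Algebra K E] [Algebra K L] [IsPurelyInseparable K E]
    [FiniteDimensional K L] [Algebra.IsSeparable K L] :
    IsField (E ⊗[K] L) := by
  obtain ⟨α, hα⟩ := Field.exists_primitive_element K L
  have hint : IsIntegral K α := IsIntegral.of_finite K α
  have hirr : Irreducible (minpoly K α) := minpoly.irreducible hint
  have hsep : (minpoly K α).Separable := Algebra.IsSeparable.isSeparable K α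
  have hirr' : Irreducible ((minpoly K α).map (algebraMap K E)) :=
    hsep.map_irreducible_of_isPurelyInseparable E hirr
  haveI := Fact.mk hirr'
  set g := (minpoly K α).map (algebraMap K E) with hg
  have hroot : Polynomial.aeval ((1 : E) ⊗ₜ[K] α) g = 0 := by
    have h1 : (1 : E) ⊗ₜ[K] α =
        Algebra.TensorProduct.includeRight (R := K) (A := E) α := rfl
    rw [hg, Polynomial.aeval_map_algebraMap, h1, Polynomial.aeval_algHom_apply,
      minpoly.aeval, map_zero]
  let χ : AdjoinRoot g →ₐ[E] E ⊗[K] L := AdjoinRoot.liftAlgHom g (Algebra.ofId E _) ((1 : E) ⊗ₜ[K] α) hroot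
  have key : ∀ (e : E) (l : L), ∃ y, χ y = e ⊗ₜ[K] l := by
    intro e l
    have hl : l ∈ Algebra.adjoin K ({α} : Set L) := by
      rw [← IntermediateField.adjoin_simple_toSubalgebra_of_isAlgebraic hint.isAlgebraic]
      exact hα ▸ IntermediateField.mem_top
    rw [Algebra.adjoin_singleton_eq_range_aeval] at hl
    obtain ⟨p, hp'⟩ := hl
    have hp : Polynomial.aeval α p = l := hp'
    refine ⟨AdjoinRoot.mk g (Polynomial.C e * p.map (algebraMap K E)), ?_⟩
    have h1 : (1 : E) ⊗ₜ[K] α =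
        Algebra.TensorProduct.includeRight (R := K) (A := E) α := rfl
    rw [show χ (AdjoinRoot.mk g (Polynomial.C e * p.map (algebraMap K E))) =
        Polynomial.aeval ((1 : E) ⊗ₜ[K] α) (Polynomial.C e * p.map (algebraMap K E)) from
        AdjoinRoot.liftAlgHom_mk _ _ _ _ _, map_mul, Polynomial.aeval_C,
      Polynomial.aeval_map_algebraMap, h1, Polynomial.aeval_algHom_apply, hp,
      Algebra.TensorProduct.includeRight_apply, Algebra.TensorProduct.algebraMap_apply,
      Algebra.TensorProduct.tmul_mul_tmul, mul_one, one_mul]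
    rfl
  have hsurj : Function.Surjective χ := by
    intro x
    obtain ⟨S, rfl⟩ := TensorProduct.exists_finset x
    choose y hy using key
    exact ⟨∑ i ∈ S, y i.1 i.2, by rw [map_sum]; exact Finset.sum_congr rfl fun i _ => hy i.1 i.2⟩
  have hinj : Function.Injective χ := χ.toRingHom.injective
  exact MulEquiv.isField (Field.toIsField (AdjoinRoot g))
    (AlgEquiv.ofBijective χ ⟨hinj, hsurj⟩).symm.toMulEquiv

set_option synthInstance.maxHeartbeats 400000

/-- If `E` is a purely inseparable field extension of `K` and `K'` is a
separable algebraic field extension of `K`, then the tensor product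
`E ⊗[K] K'` is a field. -/
theorem isField_tensorProduct_of_purelyInseparable_of_separable
    (K E K' : Type*) [Field K] [Field E] [Field K']
    [Algebra K E] [Algebra K K']
    [IsPurelyInseparable K E]
    [Algebra.IsAlgebraic K K'] [Algebra.IsSeparable K K'] :
    IsField (E ⊗[K] K') := by
  classical
  refine ⟨exists_pair_ne _, mul_comm, ?_⟩
  intro x hx
  obtain ⟨S, rfl⟩ := TensorProduct.exists_finset x
  set L := IntermediateField.adjoin K ((S.image Prod.snd : Finset K') : Set K') with hL
  haveI : FiniteDimensional K L :=
    IntermediateField.finiteDimensional_adjoin fun z _ => Algebra.IsIntegral.isIntegral z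
  let φ : E ⊗[K] L →ₐ[K] E ⊗[K] K' :=
    Algebra.TensorProduct.map (AlgHom.id K E) L.val
  have hφinj : Function.Injective φ := by
    have h : ⇑φ = ⇑(LinearMap.lTensor E (L.val.toLinearMap)) := rfl
    rw [h]
    exact Module.Flat.lTensor_preserves_injective_linearMap _ (Subtype.val_injective)
  have hmem : ∀ i ∈ S, (i : E × K').2 ∈ L := fun i hi =>
    IntermediateField.subset_adjoin K _ (by
      simp only [Finset.coe_image, Set.mem_image, Finset.mem_coe]
      exact ⟨i, hi, rfl⟩)
  set y : E ⊗[K] L := ∑ i ∈ S.attach, i.1.1 ⊗ₜ[K] (⟨i.1.2, hmem i.1 i.2⟩ : L) with hy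
  have hφy : φ y = ∑ i ∈ S, i.1 ⊗ₜ[K] i.2 := by
    rw [hy, map_sum, ← Finset.sum_attach S fun i => i.1 ⊗ₜ[K] i.2]
    rfl
  have hy0 : y ≠ 0 := fun h => hx (by rw [← hφy, h]; exact map_zero φ)
  obtain ⟨z, hz⟩ := (aux_isField K E L).mul_inv_cancel hy0
  exact ⟨φ z, by rw [← hφy, ← map_mul, hz]; exact φ.map_one'⟩
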